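/- Let I ⊆ ℝ be an open interval and φ₁, φ₂ : I → ℝ twice differentiable with φ₁ ≠ 0, φ₂ ≠ 0 on I. Set Φᵢ := φᵢ² − φᵢ·φᵢ'' + 2·φᵢ'² and assume Φ₂ ≠ 0 on I and Φ₁²·φ₂⁶ − Φ₂²·φ₁⁶ = 0 on I. Then there exist constants C₁, C₂ ∈ ℝ and a sign ε ∈ {1, −1} such that φ₂·(C₁·sin ς − C₂·cos ς) + ε ≠ 0 and φ₁(ς) = φ₂(ς)/(φ₂(ς)·(C₁·sin ς − C₂·cos ς) + ε) for all ς ∈ I. -/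

import Mathlib

open Real intervalIntegral

/-- `Φ/φ³` for the quantity `Φ = φ² − φφ'' + 2φ'²`. -/
noncomputable def PhiQuot (φ : ℝ → ℝ) (x : ℝ) : ℝ :=
  (φ x ^ 2 - φ x * deriv (deriv φ) x + 2 * (deriv φ x) ^ 2) / φ x ^ 3

lemma inv_hasDerivAt2 {I : Set ℝ} {φ : ℝ → ℝ}
    (hφ : ∀ x ∈ I, DifferentiableAt ℝ φ x)
    (hφ' : ∀ x ∈ I, DifferentiableAt ℝ (deriv φ) x)
    (h0 : ∀ x ∈ I, φ x ≠ 0) {x : ℝ} (hx : x ∈ I) :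
    HasDerivAt (fun y => (φ y)⁻¹) (-(deriv φ x) / φ x ^ 2) x ∧
      HasDerivAt (fun y => -(deriv φ y) / φ y ^ 2) (PhiQuot φ x - (φ x)⁻¹) x := by
  constructor
  · exact (hφ x hx).hasDerivAt.inv (h0 x hx)
  · have hnum : HasDerivAt (fun y => -(deriv φ y)) (-(deriv (deriv φ) x)) x :=
      (hφ' x hx).hasDerivAt.neg
    have hden : HasDerivAt (fun y => φ y ^ 2) ((2 : ℕ) * φ x ^ 1 * deriv φ x) x :=
      (hφ x hx).hasDerivAt.pow 2
    have hd := hnum.div hden (pow_ne_zero 2 (h0 x hx))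
    refine hd.congr_deriv (Eq.symm ?_)
    have h3 := h0 x hx
    simp only [PhiQuot]
    field_simp
    ring

/-- Conversely, if two nonvanishing twice differentiable profile functions
`φ₁, φ₂` with `Φ₂ ≠ 0` satisfy `Φ₁²·φ₂⁶ − Φ₂²·φ₁⁶ = 0` on an open interval, then
`φ₁ = φ₂/(φ₂·(C₁·sin ς − C₂·cos ς) ± 1)` for some constants `C₁, C₂` and a sign. -/
theorem U1_solution_general
    (I : Set ℝ) (hI : IsOpen I) (hI' : I.OrdConnected)
    (φ₁ φ₂ : ℝ → ℝ)
    (hφ₁ : ∀ x ∈ I, DifferentiableAt ℝ φ₁ x)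
    (hφ₁' : ∀ x ∈ I, DifferentiableAt ℝ (deriv φ₁) x)
    (hφ₂ : ∀ x ∈ I, DifferentiableAt ℝ φ₂ x)
    (hφ₂' : ∀ x ∈ I, DifferentiableAt ℝ (deriv φ₂) x)
    (hφ₁0 : ∀ x ∈ I, φ₁ x ≠ 0)
    (hφ₂0 : ∀ x ∈ I, φ₂ x ≠ 0)
    (hΦ₂0 : ∀ x ∈ I,
      φ₂ x ^ 2 - φ₂ x * deriv (deriv φ₂) x + 2 * (deriv φ₂ x) ^ 2 ≠ 0)
    (hU₁ : ∀ x ∈ I,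
      (φ₁ x ^ 2 - φ₁ x * deriv (deriv φ₁) x + 2 * (deriv φ₁ x) ^ 2) ^ 2 * (φ₂ x) ^ 6 -
        (φ₂ x ^ 2 - φ₂ x * deriv (deriv φ₂) x + 2 * (deriv φ₂ x) ^ 2) ^ 2 * (φ₁ x) ^ 6
        = 0) :
    ∃ C₁ C₂ ε : ℝ, (ε = 1 ∨ ε = -1) ∧ ∀ x ∈ I,
      φ₂ x * (C₁ * Real.sin x - C₂ * Real.cos x) + ε ≠ 0 ∧
      φ₁ x = φ₂ x / (φ₂ x * (C₁ * Real.sin x - C₂ * Real.cos x) + ε) := by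
  rcases I.eq_empty_or_nonempty with rfl | ⟨x₀, hx₀⟩
  · exact ⟨0, 0, 1, Or.inl rfl, by simp⟩
  have hconv : Convex ℝ I := hI'.convex
  have H₁ := fun x hx => inv_hasDerivAt2 hφ₁ hφ₁' hφ₁0 (x := x) hx
  have H₂ := fun x hx => inv_hasDerivAt2 hφ₂ hφ₂' hφ₂0 (x := x) hx
  -- basic facts about h = PhiQuot φ₁ and k = PhiQuot φ₂
  have hk0 : ∀ x ∈ I, PhiQuot φ₂ x ≠ 0 := fun x hx =>
    div_ne_zero (hΦ₂0 x hx) (pow_ne_zero 3 (hφ₂0 x hx))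
  have hk2 : ∀ x ∈ I, PhiQuot φ₁ x ^ 2 = PhiQuot φ₂ x ^ 2 := by
    intro x hx
    have hU := hU₁ x hx
    have h10 := hφ₁0 x hx
    have h20 := hφ₂0 x hx
    simp only [PhiQuot]
    rw [div_pow, div_pow, div_eq_div_iff (by positivity) (by positivity)]
    ring_nf
    ring_nf at hU
    linear_combination hU
  have hh0 : ∀ x ∈ I, PhiQuot φ₁ x ≠ 0 := by
    intro x hx he
    apply hk0 x hx
    have := hk2 x hx
    rw [he] at this
    exact pow_eq_zero_iff two_ne_zero |>.mp (by simpa using this.symm)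
  -- antiderivatives
  have contOn : ∀ (φ : ℝ → ℝ), (∀ x ∈ I, DifferentiableAt ℝ φ x) → (∀ x ∈ I, φ x ≠ 0) →
      ContinuousOn (fun y => (φ y)⁻¹) I := by
    intro φ hφ h0 y hy
    exact (((hφ y hy).continuousAt).inv₀ (h0 y hy)).continuousWithinAt
  have Gderiv : ∀ (u : ℝ → ℝ), ContinuousOn u I → ∀ x ∈ I,
      HasDerivAt (fun y => ∫ t in x₀..y, u t) (u x) x := by
    intro u hu x hx
    apply intervalIntegral.integral_hasDerivAt_right
    · exact (hu.mono (hI'.uIcc_subset hx₀ hx)).intervalIntegrable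
    · exact hu.stronglyMeasurableAtFilter hI x hx
    · exact (hu x hx).continuousAt (hI.mem_nhds hx)
  -- Darboux sign lemma
  have signlem : ∀ (f F : ℝ → ℝ), (∀ x ∈ I, HasDerivAt F (f x) x) → (∀ x ∈ I, f x ≠ 0) →
      (∀ x ∈ I, f x < 0) ∨ ∀ x ∈ I, 0 < f x := fun f F hF hf0 =>
    hasDerivWithinAt_forall_lt_or_forall_gt_of_forall_ne hconv
      (fun x hx => (hF x hx).hasDerivWithinAt) hf0
  have hFh : ∀ x ∈ I, HasDerivAt
      (fun y => -(deriv φ₁ y) / φ₁ y ^ 2 + ∫ t in x₀..y, (φ₁ t)⁻¹) (PhiQuot φ₁ x) x := by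
    intro x hx
    have := (H₁ x hx).2.add (Gderiv _ (contOn φ₁ hφ₁ hφ₁0) x hx)
    exact this.congr_deriv (by ring)
  have hFk : ∀ x ∈ I, HasDerivAt
      (fun y => -(deriv φ₂ y) / φ₂ y ^ 2 + ∫ t in x₀..y, (φ₂ t)⁻¹) (PhiQuot φ₂ x) x := by
    intro x hx
    have := (H₂ x hx).2.add (Gderiv _ (contOn φ₂ hφ₂ hφ₂0) x hx)
    exact this.congr_deriv (by ring)
  -- factor identity
  have factor : ∀ x ∈ I,
      (PhiQuot φ₁ x - PhiQuot φ₂ x) * (PhiQuot φ₁ x + PhiQuot φ₂ x) = 0 := fun x hx => by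
    linear_combination hk2 x hx
  -- obtain the sign
  obtain ⟨ε, hε, hεhk⟩ : ∃ ε : ℝ, (ε = 1 ∨ ε = -1) ∧
      ∀ x ∈ I, PhiQuot φ₁ x = ε * PhiQuot φ₂ x := by
    rcases signlem _ _ hFh hh0 with hs₁ | hs₁ <;> rcases signlem _ _ hFk hk0 with hs₂ | hs₂
    · exact ⟨1, Or.inl rfl, fun x hx => by
        rcases mul_eq_zero.mp (factor x hx) with e | e
        · linarith
        · nlinarith [hs₁ x hx, hs₂ x hx]⟩
    · exact ⟨-1, Or.inr rfl, fun x hx => by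
        rcases mul_eq_zero.mp (factor x hx) with e | e
        · nlinarith [hs₁ x hx, hs₂ x hx]
        · linarith⟩
    · exact ⟨-1, Or.inr rfl, fun x hx => by
        rcases mul_eq_zero.mp (factor x hx) with e | e
        · nlinarith [hs₁ x hx, hs₂ x hx]
        · linarith⟩
    · exact ⟨1, Or.inl rfl, fun x hx => by
        rcases mul_eq_zero.mp (factor x hx) with e | e
        · linarith
        · nlinarith [hs₁ x hx, hs₂ x hx]⟩
  -- the harmonic oscillator
  set w : ℝ → ℝ := fun y => (φ₁ y)⁻¹ - ε * (φ₂ y)⁻¹ with hw_def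
  set W : ℝ → ℝ := fun y => -(deriv φ₁ y) / φ₁ y ^ 2 - ε * (-(deriv φ₂ y) / φ₂ y ^ 2) with hW_def
  have hw : ∀ x ∈ I, HasDerivAt w (W x) x := fun x hx =>
    ((H₁ x hx).1.sub ((H₂ x hx).1.const_mul ε))
  have hw' : ∀ x ∈ I, HasDerivAt W (-(w x)) x := by
    intro x hx
    have := (H₁ x hx).2.sub ((H₂ x hx).2.const_mul ε)
    refine this.congr_deriv (Eq.symm ?_)
    have e1 := hεhk x hx
    simp only [hw_def]
    linear_combination -e1
  -- constancy
  have const_of : ∀ (f : ℝ → ℝ), (∀ x ∈ I, HasDerivAt f 0 x) → ∀ x ∈ I, f x = f x₀ := by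
    intro f hf x hx
    refine hconv.is_const_of_fderivWithin_eq_zero
      (fun y hy => (hf y hy).differentiableAt.differentiableWithinAt) ?_ hx hx₀
    intro y hy
    rw [fderivWithin_of_isOpen hI hy, (hf y hy).hasFDerivAt.fderiv]
    ext
    simp

  have hp : ∀ x ∈ I, w x * Real.cos x - W x * Real.sin x
      = w x₀ * Real.cos x₀ - W x₀ * Real.sin x₀ := by
    apply const_of
    intro x hx
    have := ((hw x hx).mul (Real.hasDerivAt_cos x)).sub ((hw' x hx).mul (Real.hasDerivAt_sin x))
    refine this.congr_deriv (Eq.symm ?_)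
    ring
  have hq : ∀ x ∈ I, w x * Real.sin x + W x * Real.cos x
      = w x₀ * Real.sin x₀ + W x₀ * Real.cos x₀ := by
    apply const_of
    intro x hx
    have := ((hw x hx).mul (Real.hasDerivAt_sin x)).add ((hw' x hx).mul (Real.hasDerivAt_cos x))
    refine this.congr_deriv (Eq.symm ?_)
    ring
  refine ⟨w x₀ * Real.sin x₀ + W x₀ * Real.cos x₀,
    -(w x₀ * Real.cos x₀ - W x₀ * Real.sin x₀), ε, hε, fun x hx => ?_⟩
  have key : (w x₀ * Real.sin x₀ + W x₀ * Real.cos x₀) * Real.sin x -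
      -(w x₀ * Real.cos x₀ - W x₀ * Real.sin x₀) * Real.cos x = w x := by
    have e1 := hp x hx
    have e2 := hq x hx
    have e3 := Real.sin_sq_add_cos_sq x
    linear_combination (-(Real.sin x)) * e2 - (Real.cos x) * e1 + w x * e3
  rw [key]
  have h10 := hφ₁0 x hx
  have h20 := hφ₂0 x hx
  have hden : φ₂ x * w x + ε = φ₂ x * (φ₁ x)⁻¹ := by
    simp only [hw_def]
    field_simp
    ring
  rw [hden]
  constructor
  · exact mul_ne_zero h20 (inv_ne_zero h10)
  · field_simp
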